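/- Let A_1, …, A_N (N ≥ 1) be projective measurements on a finite-dimensional complex Hilbert space H, where A_m is given by the family of projections (P^m_i), and define D_F(A_m;ψ) = 1 − Σ_i ⟨ψ, P^m_i ψ⟩² for unit vectors ψ. Then the infimum over unit vectors ψ of the average (1/N) Σ_{m=1}^{N} D_F(A_m;ψ) equals 0 if and only if the measurements have a common eigenvector, i.e. there exists a unit vector ψ such that for every m there is an index k_m with P^m_{k_m} ψ = ψ. In particular, if the measurements have no common eigenvector, there exists d > 0 such that (1/N) Σ_m D_F(A_m;ψ) ≥ d for every unit vector ψ. -/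

import Mathlib

open Matrix

namespace DisturbanceAux
open ComplexOrder

variable {n : ℕ}

lemma dot_sum {ι : Type*} [Fintype ι] (v : Fin n → ℂ) (w : ι → Fin n → ℂ) :
    v ⬝ᵥ (∑ i, w i) = ∑ i, v ⬝ᵥ w i := by
  simp only [dotProduct, Finset.sum_apply, Finset.mul_sum]
  rw [Finset.sum_comm]

lemma quad_eq (M : Matrix (Fin n) (Fin n) ℂ) (hM : M.IsHermitian) (hp : M * M = M)
    (ψ : Fin n → ℂ) : star ψ ⬝ᵥ M *ᵥ ψ = star (M *ᵥ ψ) ⬝ᵥ (M *ᵥ ψ) := by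
  rw [star_mulVec, hM.eq, ← dotProduct_mulVec, mulVec_mulVec, hp]

lemma star_self_re_nonneg (v : Fin n → ℂ) :
    0 ≤ (star v ⬝ᵥ v).re ∧ (star v ⬝ᵥ v).im = 0 := by
  have h := dotProduct_star_self_nonneg v
  rw [Complex.le_def] at h
  exact ⟨by simpa using h.1, by simpa using h.2.symm⟩

lemma measure_facts {ι : Type*} [Fintype ι] (P : ι → Matrix (Fin n) (Fin n) ℂ)
    (hherm : ∀ i, (P i).IsHermitian) (hproj : ∀ i, P i * P i = P i)
    (horth : ∀ i j, i ≠ j → P i * P j = 0) (hsum : ∑ i, P i = 1)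
    (ψ : Fin n → ℂ) (hψ : star ψ ⬝ᵥ ψ = 1) :
    (0 ≤ 1 - ∑ i, ((star ψ ⬝ᵥ (P i) *ᵥ ψ).re) ^ 2) ∧
    ((1 - ∑ i, ((star ψ ⬝ᵥ (P i) *ᵥ ψ).re) ^ 2 = 0) ↔ ∃ k, (P k) *ᵥ ψ = ψ) := by
  set a : ι → ℝ := fun i => (star ψ ⬝ᵥ (P i) *ᵥ ψ).re with ha
  have hre : ∀ i, (star ψ ⬝ᵥ P i *ᵥ ψ) = (a i : ℂ) := by
    intro i
    have hq := quad_eq (P i) (hherm i) (hproj i) ψ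
    have h2 := (star_self_re_nonneg (P i *ᵥ ψ)).2
    apply Complex.ext
    · simp [ha]
    · rw [hq]; simpa using h2
  have hnn : ∀ i, 0 ≤ a i := by
    intro i
    have := (star_self_re_nonneg (P i *ᵥ ψ)).1
    rw [ha]; simpa [quad_eq (P i) (hherm i) (hproj i) ψ] using this
  have hsum1 : ∑ i, a i = 1 := by
    have hmv : (∑ i, P i) *ᵥ ψ = ∑ i, P i *ᵥ ψ :=
      map_sum (Matrix.mulVec.addMonoidHomLeft ψ) _ _
    have h1 : ∑ i, (star ψ ⬝ᵥ P i *ᵥ ψ) = 1 := by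
      rw [← dot_sum, ← hmv, hsum, Matrix.one_mulVec, hψ]
    have := congrArg Complex.re h1
    simpa [Complex.re_sum] using this
  have hle1 : ∀ i, a i ≤ 1 := fun i =>
    hsum1 ▸ Finset.single_le_sum (fun j _ => hnn j) (Finset.mem_univ i)
  have hsq : ∀ i, a i ^ 2 ≤ a i := fun i => by nlinarith [hnn i, hle1 i]
  have hsum2 : ∑ i, a i ^ 2 ≤ 1 := hsum1 ▸ Finset.sum_le_sum (fun i _ => hsq i)
  refine ⟨by linarith, ?_, ?_⟩
  · intro h0
    have heq : ∑ i, (a i - a i ^ 2) = 0 := by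
      rw [Finset.sum_sub_distrib, hsum1]; linarith
    have hall : ∀ i ∈ Finset.univ, a i - a i ^ 2 = 0 :=
      (Finset.sum_eq_zero_iff_of_nonneg (fun i _ => by linarith [hsq i])).mp heq
    have hne : ∃ k, a k ≠ 0 := by
      by_contra hc
      push_neg at hc
      rw [Finset.sum_eq_zero (fun i _ => hc i)] at hsum1
      norm_num at hsum1
    obtain ⟨k, hk⟩ := hne
    have hak : a k = 1 := by
      have := hall k (Finset.mem_univ k)
      have h2 : a k * (1 - a k) = 0 := by ring_nf; ring_nf at this; linarith
      rcases mul_eq_zero.mp h2 with h | h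
      · exact absurd h hk
      · linarith
    have h1 : star ψ ⬝ᵥ P k *ᵥ ψ = 1 := by rw [hre k, hak]; norm_num
    have h3 : star (P k *ᵥ ψ) ⬝ᵥ ψ = 1 := by
      rw [star_dotProduct, h1]; exact star_one ℂ
    have hq := quad_eq (P k) (hherm k) (hproj k) ψ
    have hv : star (ψ - P k *ᵥ ψ) ⬝ᵥ (ψ - P k *ᵥ ψ) = 0 := by
      rw [star_sub, sub_dotProduct, dotProduct_sub, dotProduct_sub, hψ, h1, h3, ← hq, h1]
      ring
    have := dotProduct_star_self_eq_zero.mp hv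
    exact ⟨k, (sub_eq_zero.mp this).symm⟩
  · rintro ⟨k, hk⟩
    have hak : a k = 1 := by
      rw [ha]; simp only [hk, hψ]; simp
    have hai : ∀ i, i ≠ k → a i = 0 := by
      intro i hi
      have h0 : P i *ᵥ ψ = 0 := by
        rw [← hk, mulVec_mulVec, horth i k hi, zero_mulVec]
      rw [ha]; simp [h0]
    have : ∑ i, a i ^ 2 = 1 := by
      rw [Finset.sum_eq_single k (fun i _ hi => by rw [hai i hi]; ring)
        (fun h => absurd (Finset.mem_univ k) h), hak]
      norm_num
    linarith

lemma cont_quad (M : Matrix (Fin n) (Fin n) ℂ) :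
    Continuous fun ψ : Fin n → ℂ => star ψ ⬝ᵥ M *ᵥ ψ := by
  simp only [dotProduct, mulVec, Pi.star_apply]
  exact continuous_finset_sum _ fun j _ =>
    ((continuous_apply j).star.mul (continuous_finset_sum _ fun k _ =>
      continuous_const.mul (continuous_apply k)))

lemma cont_norm : Continuous fun ψ : Fin n → ℂ => star ψ ⬝ᵥ ψ := by
  simp only [dotProduct, Pi.star_apply]
  exact continuous_finset_sum _ fun j _ =>
    (continuous_apply j).star.mul (continuous_apply j)

end DisturbanceAux

open DisturbanceAux

/-- For `N ≥ 1` projective measurements `(P m i)` on a (nonzero)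
finite-dimensional complex Hilbert space, the infimum over unit vectors of the average
fidelity-based disturbance `(1/N) ∑ m, (1 - ∑ i ⟨ψ, P m i ψ⟩²)` vanishes iff the
measurements have a common eigenvector; in particular, if they have no common
eigenvector, the average disturbance is bounded below by some `d > 0` uniformly over
all unit vectors. -/
theorem disturbance_tradeoff_family {n N : ℕ} (hn : 0 < n) (hN : 1 ≤ N)
    {I : Fin N → Type*} [∀ m, Fintype (I m)]
    (P : (m : Fin N) → I m → Matrix (Fin n) (Fin n) ℂ)
    (hherm : ∀ m i, (P m i).IsHermitian)
    (hproj : ∀ m i, P m i * P m i = P m i)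
    (horth : ∀ m, ∀ i j, i ≠ j → P m i * P m j = 0)
    (hsum : ∀ m, ∑ i, P m i = 1) :
    (sInf {x : ℝ | ∃ ψ : Fin n → ℂ, star ψ ⬝ᵥ ψ = 1 ∧
        x = (1 / (N : ℝ)) * ∑ m, (1 - ∑ i, ((star ψ ⬝ᵥ (P m i) *ᵥ ψ).re) ^ 2)} = 0
      ↔ ∃ ψ : Fin n → ℂ, star ψ ⬝ᵥ ψ = 1 ∧ ∀ m, ∃ k, (P m k) *ᵥ ψ = ψ) ∧
    ((¬ ∃ ψ : Fin n → ℂ, star ψ ⬝ᵥ ψ = 1 ∧ ∀ m, ∃ k, (P m k) *ᵥ ψ = ψ) →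
      ∃ d : ℝ, 0 < d ∧ ∀ ψ : Fin n → ℂ, star ψ ⬝ᵥ ψ = 1 →
        (1 / (N : ℝ)) * ∑ m, (1 - ∑ i, ((star ψ ⬝ᵥ (P m i) *ᵥ ψ).re) ^ 2) ≥ d) := by
  set F : (Fin n → ℂ) → ℝ :=
    fun ψ => (1 / (N : ℝ)) * ∑ m, (1 - ∑ i, ((star ψ ⬝ᵥ (P m i) *ᵥ ψ).re) ^ 2) with hF
  set S : Set (Fin n → ℂ) := {ψ | star ψ ⬝ᵥ ψ = 1} with hS
  have hNpos : (0 : ℝ) < 1 / (N : ℝ) := by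
    have : (0 : ℝ) < N := by exact_mod_cast hN
    positivity
  -- basic per-ψ facts
  have hterm : ∀ ψ ∈ S, ∀ m : Fin N,
      (0 ≤ 1 - ∑ i, ((star ψ ⬝ᵥ (P m i) *ᵥ ψ).re) ^ 2) ∧
      ((1 - ∑ i, ((star ψ ⬝ᵥ (P m i) *ᵥ ψ).re) ^ 2 = 0) ↔ ∃ k, (P m k) *ᵥ ψ = ψ) :=
    fun ψ hψ m => measure_facts (P m) (hherm m) (hproj m) (horth m) (hsum m) ψ hψ
  have hFnonneg : ∀ ψ ∈ S, 0 ≤ F ψ := fun ψ hψ =>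
    mul_nonneg hNpos.le (Finset.sum_nonneg fun m _ => (hterm ψ hψ m).1)
  have hFzero : ∀ ψ ∈ S, (F ψ = 0 ↔ ∀ m, ∃ k, (P m k) *ᵥ ψ = ψ) := by
    intro ψ hψ
    constructor
    · intro h0
      have hs : ∑ m, (1 - ∑ i, ((star ψ ⬝ᵥ (P m i) *ᵥ ψ).re) ^ 2) = 0 := by
        have := mul_eq_zero.mp h0
        rcases this with h | h
        · exact absurd h (ne_of_gt hNpos)
        · exact h
      have := (Finset.sum_eq_zero_iff_of_nonneg (fun m _ => (hterm ψ hψ m).1)).mp hs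
      exact fun m => ((hterm ψ hψ m).2).mp (this m (Finset.mem_univ m))
    · intro h
      show (1 / (N : ℝ)) * ∑ m, (1 - ∑ i, ((star ψ ⬝ᵥ (P m i) *ᵥ ψ).re) ^ 2) = 0
      have : ∀ m ∈ Finset.univ, (1 - ∑ i, ((star ψ ⬝ᵥ (P m i) *ᵥ ψ).re) ^ 2) = 0 :=
        fun m _ => ((hterm ψ hψ m).2).mpr (h m)
      rw [Finset.sum_eq_zero this, mul_zero]
  -- continuity of F
  have hFcont : Continuous F := by
    apply continuous_const.mul
    apply continuous_finset_sum
    intro m _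
    apply Continuous.sub continuous_const
    apply continuous_finset_sum
    intro i _
    exact ((Complex.continuous_re.comp (cont_quad (P m i))).pow 2)
  -- S is compact and nonempty
  have hSclosed : IsClosed S := isClosed_eq cont_norm continuous_const
  have hSsub : S ⊆ Metric.closedBall 0 1 := by
    intro ψ hψ
    rw [Metric.mem_closedBall, dist_zero_right]
    rw [pi_norm_le_iff_of_nonneg zero_le_one]
    intro i
    have h1 : ∑ j, Complex.normSq (ψ j) = 1 := by
      have := congrArg Complex.re hψ
      simpa [dotProduct, Complex.re_sum, Complex.mul_re, Complex.normSq_apply] using this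
    have h2 : Complex.normSq (ψ i) ≤ 1 :=
      h1 ▸ Finset.single_le_sum (fun j _ => Complex.normSq_nonneg (ψ j)) (Finset.mem_univ i)
    have h3 : ‖ψ i‖ ^ 2 = Complex.normSq (ψ i) := by
      rw [Complex.sq_norm]
    nlinarith [norm_nonneg (ψ i)]
  have hScompact : IsCompact S :=
    (isCompact_closedBall (0 : Fin n → ℂ) 1).of_isClosed_subset hSclosed hSsub
  have hSne : S.Nonempty := by
    refine ⟨fun i => if i = ⟨0, hn⟩ then 1 else 0, ?_⟩
    show star _ ⬝ᵥ _ = 1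
    simp [dotProduct, Pi.star_apply, apply_ite, Finset.sum_ite_eq']
  -- minimum attained
  obtain ⟨ψ₀, hψ₀S, hmin⟩ := hScompact.exists_isMinOn hSne hFcont.continuousOn
  have hleast : IsLeast {x : ℝ | ∃ ψ : Fin n → ℂ, star ψ ⬝ᵥ ψ = 1 ∧
      x = (1 / (N : ℝ)) * ∑ m, (1 - ∑ i, ((star ψ ⬝ᵥ (P m i) *ᵥ ψ).re) ^ 2)} (F ψ₀) := by
    constructor
    · exact ⟨ψ₀, hψ₀S, rfl⟩
    · rintro x ⟨ψ, hψ, rfl⟩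
      exact hmin hψ
  have hsInf := hleast.csInf_eq
  constructor
  · rw [hsInf]
    constructor
    · intro h0
      exact ⟨ψ₀, hψ₀S, (hFzero ψ₀ hψ₀S).mp h0⟩
    · rintro ⟨ψ, hψ, hcomm⟩
      have h1 : F ψ = 0 := (hFzero ψ hψ).mpr hcomm
      have h2 : F ψ₀ ≤ 0 := h1 ▸ hmin hψ
      exact le_antisymm h2 (hFnonneg ψ₀ hψ₀S)
  · intro hno
    refine ⟨F ψ₀, ?_, fun ψ hψ => hmin hψ⟩
    rcases lt_or_eq_of_le (hFnonneg ψ₀ hψ₀S) with h | h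
    · exact h
    · exact absurd ⟨ψ₀, hψ₀S, (hFzero ψ₀ hψ₀S).mp h.symm⟩ hno
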